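/- Let p be a prime. Let L be the set of functions f : ℤ_p → ℤ_p that are Lipschitz with constant p⁻¹ (i.e., ‖f x − f y‖ ≤ p⁻¹·‖x − y‖ for all x, y); L is a subring of the ring of all functions ℤ_p → ℤ_p with pointwise operations. Then the commutative ring L has infinite Krull dimension: there exist strictly decreasing chains of prime ideals of L of arbitrary finite length (equivalently, ringKrullDim L = ⊤). -/

import Mathlib

open scoped Classical

namespace LipKrull

variable (p : ℕ) [hp : Fact p.Prime]

lemma one_lt_p : (1 : ℝ) < (p : ℝ) := by exact_mod_cast hp.out.one_lt
lemma p_pos : (0 : ℝ) < (p : ℝ) := lt_trans one_pos (one_lt_p p)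

variable {p}

lemma norm_sub_eq {a b : ℤ_[p]} (h : ‖b‖ < ‖a‖) : ‖a - b‖ = ‖a‖ := by
  have h1 : ‖a - b‖ ≤ ‖a‖ := by
    calc ‖a - b‖ = ‖a + (-b)‖ := by ring_nf
    _ ≤ max ‖a‖ ‖-b‖ := PadicInt.nonarchimedean _ _
    _ ≤ ‖a‖ := by rw [norm_neg]; exact max_le le_rfl h.le
  refine le_antisymm h1 ?_
  have h2 : ‖a‖ ≤ max ‖a - b‖ ‖b‖ := by
    calc ‖a‖ = ‖(a - b) + b‖ := by ring_nf
    _ ≤ _ := PadicInt.nonarchimedean _ _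
  rcases max_cases ‖a - b‖ ‖b‖ with ⟨he, _⟩ | ⟨he, _⟩
  · rwa [he] at h2
  · rw [he] at h2; exact absurd (lt_of_le_of_lt h2 h) (lt_irrefl _)

variable (p)

/-- the Lipschitz subring -/
noncomputable def L : Subring (ℤ_[p] → ℤ_[p]) where
  carrier := {f | ∀ x y : ℤ_[p], ‖f x - f y‖ ≤ (p : ℝ)⁻¹ * ‖x - y‖}
  zero_mem' := by
    intro x y
    simp only [Pi.zero_apply, sub_zero, norm_zero]
    positivity
  one_mem' := by
    intro x y
    simp only [Pi.one_apply, sub_self, norm_zero]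
    positivity
  add_mem' := by
    intro f g hf hg x y
    have : (f + g) x - (f + g) y = (f x - f y) + (g x - g y) := by
      simp [Pi.add_apply]; ring
    rw [this]
    exact (PadicInt.nonarchimedean _ _).trans (max_le (hf x y) (hg x y))
  neg_mem' := by
    intro f hf x y
    have : (-f) x - (-f) y = -(f x - f y) := by simp [Pi.neg_apply]; ring
    rw [this, norm_neg]; exact hf x y
  mul_mem' := by
    intro f g hf hg x y
    have : (f * g) x - (f * g) y = f x * (g x - g y) + (f x - f y) * g y := by
      simp [Pi.mul_apply]; ring
    rw [this]
    refine (PadicInt.nonarchimedean _ _).trans (max_le ?_ ?_)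
    · rw [norm_mul]
      calc ‖f x‖ * ‖g x - g y‖ ≤ 1 * ‖g x - g y‖ :=
          mul_le_mul_of_nonneg_right (PadicInt.norm_le_one _) (norm_nonneg _)
      _ = ‖g x - g y‖ := one_mul _
      _ ≤ _ := hg x y
    · rw [norm_mul]
      calc ‖f x - f y‖ * ‖g y‖ ≤ ‖f x - f y‖ * 1 :=
          mul_le_mul_of_nonneg_left (PadicInt.norm_le_one _) (norm_nonneg _)
      _ = ‖f x - f y‖ := mul_one _
      _ ≤ _ := hf x y

/-- the chain of prime ideals -/
noncomputable def Pc (c : ℕ) : Ideal (L p) where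
  carrier := {f | ∀ M : ℕ,
    {n : ℕ | ‖(f : ℤ_[p] → ℤ_[p]) ((p : ℤ_[p]) ^ n)‖ ≤ (p : ℝ) ^ (-(M * n ^ c : ℤ))}
      ∈ Filter.hyperfilter ℕ}
  zero_mem' := by
    intro M
    have : {n : ℕ | ‖((0 : L p) : ℤ_[p] → ℤ_[p]) ((p : ℤ_[p]) ^ n)‖ ≤ (p : ℝ) ^ (-(M * n ^ c : ℤ))}
        = Set.univ := by
      ext n
      simp only [Set.mem_setOf_eq, Set.mem_univ, iff_true]
      have : ((0 : L p) : ℤ_[p] → ℤ_[p]) = 0 := rfl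
      rw [this, Pi.zero_apply, norm_zero]
      positivity
    rw [this]
    exact Filter.univ_mem
  add_mem' := by
    intro f g hf hg M
    filter_upwards [hf M, hg M] with n h1 h2
    have he : ((f + g : L p) : ℤ_[p] → ℤ_[p]) ((p : ℤ_[p]) ^ n)
        = (f : ℤ_[p] → ℤ_[p]) ((p : ℤ_[p]) ^ n) + (g : ℤ_[p] → ℤ_[p]) ((p : ℤ_[p]) ^ n) := rfl
    rw [he]
    exact (PadicInt.nonarchimedean _ _).trans (max_le h1 h2)
  smul_mem' := by
    intro r f hf M
    filter_upwards [hf M] with n h1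
    rw [smul_eq_mul]
    have he : ((r * f : L p) : ℤ_[p] → ℤ_[p]) ((p : ℤ_[p]) ^ n)
        = (r : ℤ_[p] → ℤ_[p]) ((p : ℤ_[p]) ^ n) * (f : ℤ_[p] → ℤ_[p]) ((p : ℤ_[p]) ^ n) := rfl
    rw [he, norm_mul]
    calc ‖(r : ℤ_[p] → ℤ_[p]) ((p : ℤ_[p]) ^ n)‖ * ‖(f : ℤ_[p] → ℤ_[p]) ((p : ℤ_[p]) ^ n)‖
        ≤ 1 * ‖(f : ℤ_[p] → ℤ_[p]) ((p : ℤ_[p]) ^ n)‖ :=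
        mul_le_mul_of_nonneg_right (PadicInt.norm_le_one _) (norm_nonneg _)
      _ = _ := one_mul _
      _ ≤ _ := h1

variable {p}

lemma Pc_isPrime (c : ℕ) : (Pc p c).IsPrime := by
  constructor
  · intro htop
    have h1 : (1 : L p) ∈ Pc p c := htop ▸ Submodule.mem_top
    have h2 := h1 1
    have hsub : {n : ℕ | ‖((1 : L p) : ℤ_[p] → ℤ_[p]) ((p : ℤ_[p]) ^ n)‖
        ≤ (p : ℝ) ^ (-(1 * n ^ c : ℤ))} ⊆ {0} := by
      intro n hn
      simp only [Set.mem_setOf_eq] at hn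
      have he : ((1 : L p) : ℤ_[p] → ℤ_[p]) ((p : ℤ_[p]) ^ n) = 1 := rfl
      rw [he, norm_one] at hn
      by_contra h0
      have hn1 : 1 ≤ n := Nat.one_le_iff_ne_zero.2 h0
      have : (p : ℝ) ^ (-(1 * n ^ c : ℤ)) < 1 := by
        rw [← zpow_zero (p : ℝ)]
        rw [zpow_lt_zpow_iff_right₀ (one_lt_p p)]
        have : 1 ≤ (n : ℤ) ^ c := one_le_pow₀ (by exact_mod_cast hn1)
        omega
      linarith
    exact Filter.notMem_hyperfilter_of_finite ((Set.finite_singleton 0).subset hsub) h2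
  · intro f g hfg
    by_contra hor
    push_neg at hor
    obtain ⟨hf, hg⟩ := hor
    obtain ⟨Mf, hMf⟩ : ∃ M : ℕ,
        {n : ℕ | ‖(f : ℤ_[p] → ℤ_[p]) ((p : ℤ_[p]) ^ n)‖ ≤ (p : ℝ) ^ (-(M * n ^ c : ℤ))}
          ∉ Filter.hyperfilter ℕ := by
      by_contra h; push_neg at h; exact hf h
    obtain ⟨Mg, hMg⟩ : ∃ M : ℕ,
        {n : ℕ | ‖(g : ℤ_[p] → ℤ_[p]) ((p : ℤ_[p]) ^ n)‖ ≤ (p : ℝ) ^ (-(M * n ^ c : ℤ))}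
          ∉ Filter.hyperfilter ℕ := by
      by_contra h; push_neg at h; exact hg h
    have hcf := Ultrafilter.compl_mem_iff_notMem.2 hMf
    have hcg := Ultrafilter.compl_mem_iff_notMem.2 hMg
    have hkey := hfg (Mf + Mg)
    have : {n : ℕ | ‖((f * g : L p) : ℤ_[p] → ℤ_[p]) ((p : ℤ_[p]) ^ n)‖
        ≤ (p : ℝ) ^ (-((Mf + Mg) * n ^ c : ℤ))}ᶜ ∈ Filter.hyperfilter ℕ := by
      filter_upwards [hcf, hcg] with n h1 h2
      simp only [Set.mem_compl_iff, Set.mem_setOf_eq, not_le] at h1 h2 ⊢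
      have he : ((f * g : L p) : ℤ_[p] → ℤ_[p]) ((p : ℤ_[p]) ^ n)
          = (f : ℤ_[p] → ℤ_[p]) ((p : ℤ_[p]) ^ n) * (g : ℤ_[p] → ℤ_[p]) ((p : ℤ_[p]) ^ n) := rfl
      rw [he, norm_mul]
      calc (p : ℝ) ^ (-((Mf + Mg) * n ^ c : ℤ))
          = (p : ℝ) ^ (-(Mf * n ^ c : ℤ)) * (p : ℝ) ^ (-(Mg * n ^ c : ℤ)) := by
            rw [← zpow_add₀ (ne_of_gt (p_pos p))]
            ring_nf
        _ < _ := by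
            apply mul_lt_mul'' h1 h2 <;> positivity
    exact (Ultrafilter.compl_mem_iff_notMem.1 this) hkey

lemma Pc_le {c d : ℕ} (h : c ≤ d) : Pc p d ≤ Pc p c := by
  intro f hf M
  have h0 : ({0} : Set ℕ)ᶜ ∈ Filter.hyperfilter ℕ :=
    Filter.compl_mem_hyperfilter_of_finite (Set.finite_singleton 0)
  filter_upwards [hf M, h0] with n h1 h2
  refine h1.trans ?_
  rw [zpow_le_zpow_iff_right₀ (one_lt_p p)]
  have hn1 : 1 ≤ n := by
    simp only [Set.mem_compl_iff, Set.mem_singleton_iff] at h2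
    omega
  have : (n : ℤ) ^ c ≤ (n : ℤ) ^ d := pow_le_pow_right₀ (by exact_mod_cast hn1) h
  have hM : (0 : ℤ) ≤ M := Int.natCast_nonneg M
  nlinarith

/-- the ball condition -/
def Cnd (p : ℕ) [Fact p.Prime] (x : ℤ_[p]) (n : ℕ) : Prop :=
  1 ≤ n ∧ ‖x - (p : ℤ_[p]) ^ n‖ ≤ (p : ℝ) ^ (-(n + 1) : ℤ)

lemma norm_p_pow_lt {n m : ℕ} (h : n < m) : ‖(p : ℤ_[p]) ^ m‖ < ‖(p : ℤ_[p]) ^ n‖ := by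
  rw [PadicInt.norm_p_pow, PadicInt.norm_p_pow]
  rw [zpow_lt_zpow_iff_right₀ (one_lt_p p)]
  omega

lemma norm_pn_sub_pm {n m : ℕ} (h : n < m) :
    ‖(p : ℤ_[p]) ^ n - (p : ℤ_[p]) ^ m‖ = (p : ℝ) ^ (-n : ℤ) := by
  rw [norm_sub_eq (norm_p_pow_lt h), PadicInt.norm_p_pow]

lemma Cnd_unique {x : ℤ_[p]} {n m : ℕ} (hn : Cnd p x n) (hm : Cnd p x m) : n = m := by
  by_contra hne
  wlog hlt : n < m generalizing n m
  · exact this hm hn (Ne.symm hne) (by omega)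
  have h1 : ‖(p : ℤ_[p]) ^ n - (p : ℤ_[p]) ^ m‖ = (p : ℝ) ^ (-n : ℤ) := norm_pn_sub_pm hlt
  have h2 : ‖(p : ℤ_[p]) ^ n - (p : ℤ_[p]) ^ m‖ ≤ (p : ℝ) ^ (-(n + 1) : ℤ) := by
    have he : (p : ℤ_[p]) ^ n - (p : ℤ_[p]) ^ m
        = -(x - (p : ℤ_[p]) ^ n) + (x - (p : ℤ_[p]) ^ m) := by ring
    rw [he]
    refine (PadicInt.nonarchimedean _ _).trans (max_le ?_ ?_)
    · rw [norm_neg]; exact hn.2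
    · refine hm.2.trans ?_
      rw [zpow_le_zpow_iff_right₀ (one_lt_p p)]
      omega
  rw [h1] at h2
  rw [zpow_le_zpow_iff_right₀ (one_lt_p p)] at h2
  omega

/-- exponent function -/
def e (c n : ℕ) : ℕ := n ^ (c + 1) + n + 1

lemma e_ge {c n : ℕ} (hn : 1 ≤ n) : n + 2 ≤ e c n := by
  have : 1 ≤ n ^ (c + 1) := Nat.one_le_pow _ _ hn
  unfold e; omega

/-- the witness function -/
noncomputable def F (c : ℕ) : ℤ_[p] → ℤ_[p] := fun x =>
  if h : ∃ n, Cnd p x n then (p : ℤ_[p]) ^ (e c h.choose) else 0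

lemma F_apply_pow (c : ℕ) {n : ℕ} (hn : 1 ≤ n) :
    F c ((p : ℤ_[p]) ^ n) = (p : ℤ_[p]) ^ (e c n) := by
  have hc : Cnd p ((p : ℤ_[p]) ^ n) n := by
    refine ⟨hn, ?_⟩
    rw [sub_self, norm_zero]
    positivity
  have hex : ∃ m, Cnd p ((p : ℤ_[p]) ^ n) m := ⟨n, hc⟩
  rw [F, dif_pos hex]
  congr 1
  exact congrArg (e c) (Cnd_unique hex.choose_spec hc)

lemma norm_x_sub_y_eq {x y : ℤ_[p]} {n m : ℕ} (hn : Cnd p x n) (hm : Cnd p y m) (hlt : n < m) :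
    ‖x - y‖ = (p : ℝ) ^ (-n : ℤ) := by
  have he : x - y = ((p : ℤ_[p]) ^ n - (p : ℤ_[p]) ^ m)
      - (((p : ℤ_[p]) ^ n - x) - ((p : ℤ_[p]) ^ m - y)) := by ring
  have hb : ‖(p : ℤ_[p]) ^ n - x - ((p : ℤ_[p]) ^ m - y)‖ ≤ (p : ℝ) ^ (-(n + 1) : ℤ) := by
    rw [sub_eq_add_neg]
    refine (PadicInt.nonarchimedean _ _).trans (max_le ?_ ?_)
    · rw [norm_sub_rev]; exact hn.2
    · rw [norm_neg, norm_sub_rev]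
      refine hm.2.trans ?_
      rw [zpow_le_zpow_iff_right₀ (one_lt_p p)]
      omega
  have hblt : ‖(p : ℤ_[p]) ^ n - x - ((p : ℤ_[p]) ^ m - y)‖
      < ‖(p : ℤ_[p]) ^ n - (p : ℤ_[p]) ^ m‖ := by
    rw [norm_pn_sub_pm hlt]
    refine lt_of_le_of_lt hb ?_
    rw [zpow_lt_zpow_iff_right₀ (one_lt_p p)]
    omega
  rw [he, norm_sub_eq hblt, norm_pn_sub_pm hlt]

lemma norm_x_sub_y_gt {x y : ℤ_[p]} {n : ℕ} (hn : Cnd p x n) (hy : ¬ Cnd p y n) :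
    (p : ℝ) ^ (-(n + 1) : ℤ) < ‖x - y‖ := by
  have hyn : (p : ℝ) ^ (-(n + 1) : ℤ) < ‖y - (p : ℤ_[p]) ^ n‖ := by
    by_contra hle
    exact hy ⟨hn.1, not_lt.1 hle⟩
  have he : x - y = -((y - (p : ℤ_[p]) ^ n) - (x - (p : ℤ_[p]) ^ n)) := by ring
  rw [he, norm_neg, norm_sub_eq (lt_of_le_of_lt hn.2 hyn)]
  exact hyn

lemma norm_F_le {c n : ℕ} (hn : 1 ≤ n) :
    ‖((p : ℤ_[p]) ^ (e c n))‖ ≤ (p : ℝ) ^ (-(n + 2) : ℤ) := by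
  rw [PadicInt.norm_p_pow, zpow_le_zpow_iff_right₀ (one_lt_p p)]
  have := e_ge (c := c) hn
  omega

lemma p_inv_zpow (k : ℤ) : (p : ℝ) ^ (k - 1) = (p : ℝ)⁻¹ * (p : ℝ) ^ k := by
  rw [← zpow_neg_one, ← zpow_add₀ (ne_of_gt (p_pos p))]
  ring_nf

lemma F_lip_TF (c : ℕ) {x y : ℤ_[p]} (hx : ∃ n, Cnd p x n) (hy : ¬ ∃ m, Cnd p y m) :
    ‖F c x - F c y‖ ≤ (p : ℝ)⁻¹ * ‖x - y‖ := by
  have hcx := hx.choose_spec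
  have hFx : F c x = (p : ℤ_[p]) ^ (e c hx.choose) := dif_pos hx
  have hFy : F c y = 0 := dif_neg hy
  rw [hFx, hFy, sub_zero]
  set n := hx.choose with hn
  have h1 : ‖(p : ℤ_[p]) ^ (e c n)‖ ≤ (p : ℝ) ^ (-(n + 2) : ℤ) := norm_F_le hcx.1
  have h2 : (p : ℝ) ^ (-(n + 1) : ℤ) < ‖x - y‖ :=
    norm_x_sub_y_gt hcx (fun hc => hy ⟨n, hc⟩)
  calc ‖(p : ℤ_[p]) ^ (e c n)‖ ≤ (p : ℝ) ^ (-(n + 2) : ℤ) := h1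
    _ = (p : ℝ)⁻¹ * (p : ℝ) ^ (-(n + 1) : ℤ) := by
        rw [show (-(n + 2) : ℤ) = -(n + 1) - 1 by ring, p_inv_zpow]
    _ ≤ (p : ℝ)⁻¹ * ‖x - y‖ := by
        apply mul_le_mul_of_nonneg_left h2.le
        have := p_pos p
        positivity

lemma F_lip_TT (c : ℕ) {x y : ℤ_[p]} (hx : ∃ n, Cnd p x n) (hy : ∃ m, Cnd p y m)
    (hlt : hx.choose < hy.choose) :
    ‖F c x - F c y‖ ≤ (p : ℝ)⁻¹ * ‖x - y‖ := by
  have hcx := hx.choose_spec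
  have hcy := hy.choose_spec
  have hFx : F c x = (p : ℤ_[p]) ^ (e c hx.choose) := dif_pos hx
  have hFy : F c y = (p : ℤ_[p]) ^ (e c hy.choose) := dif_pos hy
  rw [hFx, hFy]
  set n := hx.choose with hn
  set m := hy.choose with hm
  have hxy : ‖x - y‖ = (p : ℝ) ^ (-n : ℤ) := norm_x_sub_y_eq hcx hcy hlt
  have h1 : ‖(p : ℤ_[p]) ^ (e c n) - (p : ℤ_[p]) ^ (e c m)‖ ≤ (p : ℝ) ^ (-(n + 2) : ℤ) := by
    rw [sub_eq_add_neg]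
    refine (PadicInt.nonarchimedean _ _).trans (max_le (norm_F_le hcx.1) ?_)
    rw [norm_neg]
    refine (norm_F_le hcy.1).trans ?_
    rw [zpow_le_zpow_iff_right₀ (one_lt_p p)]
    omega
  rw [hxy]
  refine h1.trans ?_
  rw [← p_inv_zpow]
  rw [zpow_le_zpow_iff_right₀ (one_lt_p p)]
  omega

lemma F_lip (c : ℕ) (x y : ℤ_[p]) : ‖F c x - F c y‖ ≤ (p : ℝ)⁻¹ * ‖x - y‖ := by
  by_cases hx : ∃ n, Cnd p x n
  · by_cases hy : ∃ m, Cnd p y m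
    · rcases lt_trichotomy hx.choose hy.choose with h | h | h
      · exact F_lip_TT c hx hy h
      · have hFx : F c x = (p : ℤ_[p]) ^ (e c hx.choose) := dif_pos hx
        have hFy : F c y = (p : ℤ_[p]) ^ (e c hy.choose) := dif_pos hy
        rw [hFx, hFy, h, sub_self, norm_zero]
        have := p_pos p
        positivity
      · rw [norm_sub_rev, norm_sub_rev x y]
        exact F_lip_TT c hy hx h
    · exact F_lip_TF c hx hy
  · by_cases hy : ∃ m, Cnd p y m
    · rw [norm_sub_rev, norm_sub_rev x y]
      exact F_lip_TF c hy hx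
    · have hFx : F c x = 0 := dif_neg hx
      have hFy : F c y = 0 := dif_neg hy
      rw [hFx, hFy, sub_self, norm_zero]
      have := p_pos p
      positivity

lemma F_mem_L (c : ℕ) : F c ∈ L p := F_lip c

lemma F_mem_Pc (c : ℕ) : (⟨F c, F_mem_L c⟩ : L p) ∈ Pc p c := by
  intro M
  have hsub : {n : ℕ | max M 1 ≤ n} ⊆
      {n : ℕ | ‖((⟨F c, F_mem_L c⟩ : L p) : ℤ_[p] → ℤ_[p]) ((p : ℤ_[p]) ^ n)‖
        ≤ (p : ℝ) ^ (-(M * n ^ c : ℤ))} := by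
    intro n hn
    simp only [Set.mem_setOf_eq] at hn ⊢
    have hn1 : 1 ≤ n := le_trans (le_max_right _ _) hn
    have hnM : M ≤ n := le_trans (le_max_left _ _) hn
    show ‖F c ((p : ℤ_[p]) ^ n)‖ ≤ _
    rw [F_apply_pow c hn1, PadicInt.norm_p_pow]
    rw [zpow_le_zpow_iff_right₀ (one_lt_p p)]
    have h1 : (M : ℤ) * n ^ c ≤ (n : ℤ) * n ^ c := by
      apply mul_le_mul_of_nonneg_right (by exact_mod_cast hnM)
      positivity
    have h2 : (n : ℤ) * n ^ c = (n : ℤ) ^ (c + 1) := by ring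
    have h3 : ((e c n : ℕ) : ℤ) = (n : ℤ) ^ (c + 1) + n + 1 := by
      unfold e; push_cast; ring
    omega
  refine Filter.mem_of_superset ?_ hsub
  apply Filter.hyperfilter_le_cofinite
  have : {n : ℕ | max M 1 ≤ n}ᶜ ⊆ Set.Iio (max M 1) := by
    intro n hn
    simp only [Set.mem_compl_iff, Set.mem_setOf_eq, not_le] at hn
    exact hn
  exact Set.Finite.subset (Set.finite_Iio _) this

lemma F_not_mem_Pc (c : ℕ) (hc : 1 ≤ c) :
    (⟨F c, F_mem_L c⟩ : L p) ∉ Pc p (c + 1) := by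
  intro hmem
  have h2 := hmem 2
  have hsub : {n : ℕ | ‖((⟨F c, F_mem_L c⟩ : L p) : ℤ_[p] → ℤ_[p]) ((p : ℤ_[p]) ^ n)‖
      ≤ (p : ℝ) ^ (-(2 * n ^ (c + 1) : ℤ))} ⊆ Set.Iio 2 := by
    intro n hn
    simp only [Set.mem_setOf_eq] at hn
    simp only [Set.mem_Iio]
    by_contra hn2
    have hn2' : 2 ≤ n := by omega
    have hn1 : 1 ≤ n := by omega
    rw [F_apply_pow c hn1, PadicInt.norm_p_pow] at hn
    rw [zpow_le_zpow_iff_right₀ (one_lt_p p)] at hn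
    -- hn : -(e c n) ≤ -(2 * n ^ (c+1)), i.e. 2 * n^(c+1) ≤ e c n = n^(c+1) + n + 1
    have hineq : 2 * (n : ℤ) ^ (c + 1) ≤ ((e c n : ℕ) : ℤ) := by omega
    have h3 : ((e c n : ℕ) : ℤ) = (n : ℤ) ^ (c + 1) + n + 1 := by
      unfold e; push_cast; ring
    have hpow : (n : ℤ) ^ 2 ≤ (n : ℤ) ^ (c + 1) := by
      apply pow_le_pow_right₀ (by exact_mod_cast hn1)
      omega
    have hn2'' : (2 : ℤ) ≤ (n : ℤ) := by exact_mod_cast hn2'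
    nlinarith
  exact Filter.notMem_hyperfilter_of_finite (Set.Finite.subset (Set.finite_Iio _) hsub) h2

lemma Pc_succ_lt (c : ℕ) (hc : 1 ≤ c) : Pc p (c + 1) < Pc p c :=
  lt_of_le_of_ne (Pc_le (Nat.le_succ c))
    (fun heq => F_not_mem_Pc c hc (heq ▸ F_mem_Pc c))

lemma Pc_lt {c d : ℕ} (hc : 1 ≤ c) (hcd : c < d) : Pc p d < Pc p c :=
  lt_of_le_of_lt (Pc_le (by omega : c + 1 ≤ d)) (Pc_succ_lt c hc)

end LipKrull

theorem lipschitz_ring_infinite_krull_dimension (p : ℕ) [hp : Fact p.Prime] :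
    ∃ L : Subring (ℤ_[p] → ℤ_[p]),
      (L : Set (ℤ_[p] → ℤ_[p])) =
        {f | ∀ x y : ℤ_[p], ‖f x - f y‖ ≤ (p : ℝ)⁻¹ * ‖x - y‖} ∧
      (∀ n : ℕ, ∃ c : Fin (n + 1) → Ideal L, (∀ i, (c i).IsPrime) ∧ StrictAnti c) ∧
      ringKrullDim L = ⊤ := by
  refine ⟨LipKrull.L p, rfl, ?_, ?_⟩
  · intro n
    refine ⟨fun i => LipKrull.Pc p (i + 1), fun i => LipKrull.Pc_isPrime _, ?_⟩
    intro i j hij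
    have : (i : ℕ) + 1 < (j : ℕ) + 1 := by
      have := Fin.lt_iff_val_lt_val.1 hij
      omega
    exact LipKrull.Pc_lt (by omega) this
  · have : InfiniteDimensionalOrder (PrimeSpectrum (LipKrull.L p)) := by
      constructor
      intro n
      refine ⟨LTSeries.mk n
        (fun i => ⟨LipKrull.Pc p (n - i + 1), LipKrull.Pc_isPrime _⟩) ?_, rfl⟩
      intro i j hij
      show (⟨LipKrull.Pc p _, _⟩ : PrimeSpectrum _) < ⟨LipKrull.Pc p _, _⟩
      rw [← PrimeSpectrum.asIdeal_lt_asIdeal]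
      have hij' : (i : ℕ) < (j : ℕ) := Fin.lt_iff_val_lt_val.1 hij
      have hjn : (j : ℕ) ≤ n := Nat.lt_succ_iff.1 j.isLt
      exact LipKrull.Pc_lt (by omega) (by omega)
    exact Order.krullDim_eq_top
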